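/- Let C_1, C_2 : P → ℝ and C_3 : P → ℂ be functions such that for every z ∈ ℍ: C_1(z̃) = Im z, C_2(z̃) = 0, C_3(z̃) = 1, and for every x ∈ P and g = [[k_1,k_3],[0,k_2]] ∈ G_0: C_1(x·g) = C_1(x)·|k_1|², C_2(x·g) = C_1(x)·|k_3|² + C_2(x)·|k_2|² + Im(C_3(x)·k_3·conj(k_2)), and C_3(x·g) = C_3(x)·k_1·conj(k_2) + 2√(−1)·k_1·conj(k_3)·C_1(x). Then C_1(x) = Im(x_1·conj(x_3)), C_2(x) = Im(x_2·conj(x_4)) and C_3(x) = x_1·conj(x_4) − conj(x_2)·x_3 for all x ∈ P; i.e. the functions B_1, B_2, B_3 with these properties are unique. -/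

import Mathlib

open Complex

/-- uniqueness of the functions `B₁, B₂, B₃` on the period domain
`P = {x ∈ GL(2,ℂ) : Im(x₁ x̄₃) > 0}`: any `C₁, C₂ : P → ℝ`, `C₃ : P → ℂ` with the same
restrictions to the embedded upper half plane and the same `G₀`-equivariance must equal
`Im(x₁ x̄₃)`, `Im(x₂ x̄₄)` and `x₁ x̄₄ − x̄₂ x₃` respectively. -/
theorem B_uniqueness
    (C₁ C₂ : Matrix (Fin 2) (Fin 2) ℂ → ℝ) (C₃ : Matrix (Fin 2) (Fin 2) ℂ → ℂ)
    (hres : ∀ z : ℂ, 0 < z.im →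
      C₁ !![z, -1; 1, 0] = z.im ∧ C₂ !![z, -1; 1, 0] = 0 ∧ C₃ !![z, -1; 1, 0] = 1)
    (hact : ∀ x : Matrix (Fin 2) (Fin 2) ℂ, x.det ≠ 0 →
      0 < (x 0 0 * (starRingEnd ℂ) (x 1 0)).im →
      ∀ k₁ k₂ k₃ : ℂ, k₁ ≠ 0 → k₂ ≠ 0 →
        C₁ (x * !![k₁, k₃; 0, k₂]) = C₁ x * ‖k₁‖ ^ 2 ∧
        C₂ (x * !![k₁, k₃; 0, k₂]) =
          C₁ x * ‖k₃‖ ^ 2 + C₂ x * ‖k₂‖ ^ 2 +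
            (C₃ x * k₃ * (starRingEnd ℂ) k₂).im ∧
        C₃ (x * !![k₁, k₃; 0, k₂]) =
          C₃ x * k₁ * (starRingEnd ℂ) k₂ +
            2 * Complex.I * k₁ * (starRingEnd ℂ) k₃ * (C₁ x : ℂ)) :
    ∀ x : Matrix (Fin 2) (Fin 2) ℂ, x.det ≠ 0 →
      0 < (x 0 0 * (starRingEnd ℂ) (x 1 0)).im →
      C₁ x = (x 0 0 * (starRingEnd ℂ) (x 1 0)).im ∧
      C₂ x = (x 0 1 * (starRingEnd ℂ) (x 1 1)).im ∧
      C₃ x = x 0 0 * (starRingEnd ℂ) (x 1 1) - (starRingEnd ℂ) (x 0 1) * x 1 0 := by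
  intro x hdet him
  set a := x 0 0 with ha
  set b := x 0 1 with hb
  set c := x 1 0 with hc
  set d := x 1 1 with hd
  have hc0 : c ≠ 0 := by
    intro h; rw [h] at him; simp at him
  have hnsq : (0:ℝ) < Complex.normSq c := Complex.normSq_pos.mpr hc0
  set z : ℂ := a / c with hz
  have hzim' : z.im = (a * (starRingEnd ℂ) c).im / Complex.normSq c := by
    rw [hz]
    simp [Complex.div_im, Complex.mul_im, Complex.normSq_apply]
    ring
  have hzim : 0 < z.im := by
    rw [hzim']; exact div_pos him hnsq
  have hk2 : z * d - b ≠ 0 := by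
    intro h
    apply hdet
    have hdd : x.det = a * d - b * c := by
      rw [Matrix.det_fin_two, ← ha, ← hb, ← hc, ← hd]
    rw [hdd]
    have : (z * d - b) * c = a * d - b * c := by
      rw [hz]; field_simp
    rw [← this, h, zero_mul]
  have hfact : x = !![z, -1; 1, 0] * !![c, d; 0, z * d - b] := by
    ext i j
    fin_cases i <;> fin_cases j <;>
      simp [Matrix.mul_apply, Fin.sum_univ_two, ← ha, ← hb, ← hc, ← hd]
    rw [hz]; field_simp
  have hdet2 : (!![z, -1; 1, 0] : Matrix (Fin 2) (Fin 2) ℂ).det ≠ 0 := by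
    simp [Matrix.det_fin_two_of]
  have hpos2 : 0 < ((!![z, -1; 1, 0] : Matrix (Fin 2) (Fin 2) ℂ) 0 0 *
      (starRingEnd ℂ) ((!![z, -1; 1, 0] : Matrix (Fin 2) (Fin 2) ℂ) 1 0)).im := by
    simpa using hzim
  obtain ⟨h1, h2, h3⟩ := hact _ hdet2 hpos2 c (z * d - b) d hc0 hk2
  obtain ⟨r1, r2, r3⟩ := hres z hzim
  rw [r1] at h1 h2 h3
  rw [r2] at h2
  rw [r3] at h2 h3
  refine ⟨?_, ?_, ?_⟩
  · rw [hfact, h1, hzim', Complex.sq_norm]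
    exact div_mul_cancel₀ _ hnsq.ne'
  · rw [hfact, h2]
    simp only [one_mul, zero_mul, add_zero]
    simp only [Complex.mul_im, Complex.mul_re, Complex.sq_norm, Complex.normSq_apply,
      Complex.sub_re, Complex.sub_im, Complex.conj_re, Complex.conj_im]
    ring
  · rw [hfact, h3]
    have ha' : a = z * c := by rw [hz]; field_simp
    have hsub : z - (starRingEnd ℂ) z = 2 * (z.im : ℂ) * Complex.I := by
      simpa [mul_assoc, mul_comm, mul_left_comm] using Complex.sub_conj z
    simp only [one_mul, map_sub, map_mul]
    linear_combination (-(starRingEnd ℂ) d) * ha' + (-(c * (starRingEnd ℂ) d)) * hsub
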